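/- Let Γ be a finite multigraph and s a counting function on Γ. Then the maximal flow X_{Γ,s} in the network N_{Γ,s} equals the area |∂S| of the pair (Γ, s), i.e. X_{Γ,s} = max over compatible markings M of cr(M). -/

import Mathlib

/-- A finite multigraph: finite vertex and edge types, each edge has an
ordered pair of (possibly equal) endpoints. -/
structure Multigraph where
  V : Type
  E : Type
  [fintV : Fintype V]
  [fintE : Fintype E]
  [decV : DecidableEq V]
  [decE : DecidableEq E]
  ends : E → V × V

attribute [instance] Multigraph.fintV Multigraph.fintE Multigraph.decV Multigraph.decE

namespace Multigraph

variable (G : Multigraph)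

/-- A half-edge of `G`: each edge `e` contributes the two half-edges
`(e, false)` (at the first endpoint) and `(e, true)` (at the second endpoint). -/
abbrev Half := G.E × Bool

/-- The vertex at which a half-edge sits. -/
def vertexOf (h : G.Half) : G.V := if h.2 then (G.ends h.1).2 else (G.ends h.1).1

/-- The degree of a vertex: the number of half-edges at it (loops count twice). -/
def deg (v : G.V) : ℕ := (Finset.univ.filter fun h : G.Half => G.vertexOf h = v).card

/-- A marking `M` (a set of half-edges) is compatible with the counting function `s`
if it contains exactly `s v` half-edges at each vertex `v`. -/
def Compatible (s : G.V → ℕ) (M : Finset G.Half) : Prop :=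
  ∀ v : G.V, (M.filter fun h : G.Half => G.vertexOf h = v).card = s v

/-- The number of crossings of a marking `M`: the number of edges having exactly one
of their two half-edges in `M`. -/
def cr (M : Finset G.Half) : ℕ :=
  (Finset.univ.filter fun e : G.E =>
    ((e, false) ∈ M ∧ (e, true) ∉ M) ∨ ((e, false) ∉ M ∧ (e, true) ∈ M)).card

/-- The area `|∂S|` of the pair `(G, s)`: the maximum number of crossings over
all markings compatible with `s`. -/
noncomputable def area (s : G.V → ℕ) : ℕ :=
  sSup {k : ℕ | ∃ M : Finset G.Half, G.Compatible s M ∧ G.cr M = k}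

/-- Nodes of the network `N_{Γ,s}`: the vertices of `G` together with a
source (`Sum.inr true`) and a sink (`Sum.inr false`). -/
abbrev Node := G.V ⊕ Bool

/-- The source of the network. -/
def source : G.Node := Sum.inr true

/-- The sink of the network. -/
def sink : G.Node := Sum.inr false

/-- The number of edges of `G` joining `v` and `w`. -/
def edgesBetween (v w : G.V) : ℕ :=
  (Finset.univ.filter fun e : G.E => G.ends e = (v, w) ∨ G.ends e = (w, v)).card

/-- The capacities of the network `N_{Γ,s}`: `t v = deg v - s v` from the source to `v`,
`s v` from `v` to the sink, the number of edges between `v` and `w` for distinct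
vertices `v, w`, and `0` otherwise. -/
def cap (s : G.V → ℕ) : G.Node → G.Node → ℕ
  | Sum.inr true, Sum.inl v => G.deg v - s v
  | Sum.inl v, Sum.inr false => s v
  | Sum.inl v, Sum.inl w => if v = w then 0 else G.edgesBetween v w
  | _, _ => 0

/-- A flow in the network `N_{Γ,s}`: dominated by the capacities, and the inflow equals
the outflow at every node of `V`. -/
def IsFlow (s : G.V → ℕ) (f : G.Node → G.Node → ℕ) : Prop :=
  (∀ x y : G.Node, f x y ≤ G.cap s x y) ∧
    ∀ v : G.V, (∑ x : G.Node, f x (Sum.inl v)) = ∑ x : G.Node, f (Sum.inl v) x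

/-- The value of a flow: the total flow out of the source. -/
def flowValue (f : G.Node → G.Node → ℕ) : ℕ := ∑ x : G.Node, f G.source x

/-- The maximal flow value `X_{Γ,s}` of the network `N_{Γ,s}`. -/
noncomputable def maxFlow (s : G.V → ℕ) : ℕ :=
  sSup {k : ℕ | ∃ f : G.Node → G.Node → ℕ, G.IsFlow s f ∧ G.flowValue f = k}

end Multigraph

namespace Multigraph


variable {G : Multigraph}

def partner (h : G.Half) : G.Half := (h.1, !h.2)

@[simp] lemma partner_partner (h : G.Half) : partner (partner h) = h := by
  simp [partner]

lemma partner_ne (h : G.Half) : partner h ≠ h := by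
  rcases h with ⟨e, b⟩
  simp [partner, Prod.ext_iff]

@[simp] lemma partner_fst (h : G.Half) : (partner h).1 = h.1 := rfl

lemma eq_or_eq_partner {h h' : G.Half} (he : h'.1 = h.1) : h' = h ∨ h' = partner h := by
  rcases h with ⟨e, b⟩; rcases h' with ⟨e', b'⟩
  simp only at he; subst he
  cases b <;> cases b' <;> simp [partner]

/-- The crossing predicate. -/
def crossP (M : Finset G.Half) (e : G.E) : Prop :=
  ((e, false) ∈ M ∧ (e, true) ∉ M) ∨ ((e, false) ∉ M ∧ (e, true) ∈ M)

instance (M : Finset G.Half) : DecidablePred (crossP M) := fun _ => by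
  unfold crossP; infer_instance

lemma cr_eq_card_crossP (M : Finset G.Half) :
    G.cr M = (Finset.univ.filter (crossP M)).card := rfl

lemma crossP_iff_half (M : Finset G.Half) (h : G.Half) :
    crossP M h.1 ↔ ((h ∈ M ∧ partner h ∉ M) ∨ (h ∉ M ∧ partner h ∈ M)) := by
  rcases h with ⟨e, b⟩
  cases b <;> simp [crossP, partner] <;> tauto

lemma crossP_of_mem {M : Finset G.Half} {h : G.Half} (h1 : h ∈ M) (h2 : partner h ∉ M) :
    crossP M h.1 := (crossP_iff_half M h).2 (Or.inl ⟨h1, h2⟩)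

lemma crossP_of_not_mem {M : Finset G.Half} {h : G.Half} (h1 : h ∉ M) (h2 : partner h ∈ M) :
    crossP M h.1 := (crossP_iff_half M h).2 (Or.inr ⟨h1, h2⟩)

lemma not_crossP_of_mem {M : Finset G.Half} {h : G.Half} (h1 : h ∈ M) (h2 : partner h ∈ M) :
    ¬ crossP M h.1 := by
  rw [crossP_iff_half]; tauto

lemma not_crossP_of_not_mem {M : Finset G.Half} {h : G.Half} (h1 : h ∉ M) (h2 : partner h ∉ M) :
    ¬ crossP M h.1 := by
  rw [crossP_iff_half]; tauto

lemma mem_swapM {M : Finset G.Half} {h h0 : G.Half} (x : G.Half) (hx : x ≠ h) (hx0 : x ≠ h0) :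
    x ∈ insert h0 (M.erase h) ↔ x ∈ M := by
  simp [Finset.mem_insert, Finset.mem_erase, hx, hx0]

lemma compat_swap {s : G.V → ℕ} {M : Finset G.Half} (hM : G.Compatible s M) {h h0 : G.Half}
    (hh : h ∈ M) (hh0 : h0 ∉ M) (hv : G.vertexOf h0 = G.vertexOf h) :
    G.Compatible s (insert h0 (M.erase h)) := by
  intro u
  rw [Finset.filter_insert, Finset.filter_erase]
  by_cases hu : G.vertexOf h0 = u
  · rw [if_pos hu]
    have hhM : h ∈ M.filter (fun h' : G.Half => G.vertexOf h' = u) :=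
      Finset.mem_filter.2 ⟨hh, by rw [← hv, hu]⟩
    have h0n : h0 ∉ (M.filter (fun h' : G.Half => G.vertexOf h' = u)).erase h := by
      intro hc
      exact hh0 (Finset.mem_filter.1 (Finset.mem_of_mem_erase hc)).1
    rw [Finset.card_insert_of_notMem h0n, Finset.card_erase_of_mem hhM]
    have hpos : 1 ≤ (M.filter (fun h' : G.Half => G.vertexOf h' = u)).card :=
      Finset.card_pos.2 ⟨h, hhM⟩
    rw [hM u] at hpos ⊢
    omega
  · rw [if_neg hu]
    have : h ∉ M.filter (fun h' : G.Half => G.vertexOf h' = u) := by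
      intro hc
      exact hu (hv.trans (Finset.mem_filter.1 hc).2)
    rw [Finset.erase_eq_of_notMem this, hM u]




variable {G : Multigraph}

lemma mem_swap_iff {M : Finset G.Half} {h h0 : G.Half} (x : G.Half) :
    x ∈ insert h0 (M.erase h) ↔ (x = h0 ∨ (x ∈ M ∧ x ≠ h)) := by
  simp [Finset.mem_insert, Finset.mem_erase, and_comm]

lemma cr_swap_add_two {M : Finset G.Half} {h h0 : G.Half}
    (hh : h ∈ M) (hph : partner h ∈ M) (hh0 : h0 ∉ M) (hph0 : partner h0 ∉ M) :
    G.cr (insert h0 (M.erase h)) = G.cr M + 2 := by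
  set M' := insert h0 (M.erase h) with hM'
  have hne1 : h0 ≠ h := fun e => hh0 (e ▸ hh)
  have hne2 : h0 ≠ partner h := fun e => hh0 (e ▸ hph)
  have hne3 : partner h0 ≠ h := fun e => hph0 (e ▸ hh)
  have hne4 : partner h0 ≠ partner h := fun e => hph0 (e ▸ hph)
  have hedge : h0.1 ≠ h.1 := by
    intro e
    rcases eq_or_eq_partner e with e' | e'
    · exact hne1 e'
    · exact hne2 e'
  -- memberships in M'
  have mH : h ∉ M' := by rw [mem_swap_iff]; simp [hne1.symm]
  have mPH : partner h ∈ M' := by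
    rw [mem_swap_iff]; exact Or.inr ⟨hph, partner_ne h⟩
  have mH0 : h0 ∈ M' := Finset.mem_insert_self _ _
  have mPH0 : partner h0 ∉ M' := by
    rw [mem_swap_iff]
    push_neg
    refine ⟨(partner_ne h0), fun hc => absurd hc hph0⟩
  have hset : Finset.univ.filter (crossP M') =
      insert h.1 (insert h0.1 (Finset.univ.filter (crossP M))) := by
    ext e
    simp only [Finset.mem_filter, Finset.mem_univ, true_and, Finset.mem_insert]
    by_cases he : e = h.1
    · subst he
      simp only [eq_self_iff_true, true_or, iff_true]
      exact crossP_of_not_mem mH mPH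
    · by_cases he0 : e = h0.1
      · subst he0
        have : crossP M' h0.1 := crossP_of_mem mH0 mPH0
        simp [he, this]
      · have unch : ∀ b : Bool, ((e, b) ∈ M' ↔ (e, b) ∈ M) := by
          intro b
          refine mem_swapM _ (fun hc => he (congrArg Prod.fst hc)) (fun hc => he0 (congrArg Prod.fst hc))
        simp only [he, he0, false_or]
        unfold crossP
        rw [unch false, unch true]
  have hcH : h.1 ∉ insert h0.1 (Finset.univ.filter (crossP M)) := by
    simp only [Finset.mem_insert, Finset.mem_filter, Finset.mem_univ, true_and]
    push_neg
    exact ⟨fun hc => hedge hc.symm, not_crossP_of_mem hh hph⟩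
  have hcH0 : h0.1 ∉ Finset.univ.filter (crossP M) := by
    simp only [Finset.mem_filter, Finset.mem_univ, true_and]
    exact not_crossP_of_not_mem hh0 hph0
  rw [cr_eq_card_crossP, cr_eq_card_crossP, hset, Finset.card_insert_of_notMem hcH,
    Finset.card_insert_of_notMem hcH0]

lemma cr_swap_eq {M : Finset G.Half} {h h0 : G.Half}
    (hh : h ∈ M) (hph : partner h ∉ M) (hh0 : h0 ∉ M) (hph0 : partner h0 ∉ M)
    (hne : h0 ≠ partner h) :
    G.cr (insert h0 (M.erase h)) = G.cr M := by
  set M' := insert h0 (M.erase h) with hM'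
  have hne1 : h0 ≠ h := fun e => hh0 (e ▸ hh)
  have hne3 : partner h0 ≠ h := fun e => hph0 (e ▸ hh)
  have hne4 : partner h0 ≠ partner h := fun e => hne1 (by
    have := congrArg partner e; simpa using this)
  have hedge : h0.1 ≠ h.1 := by
    intro e
    rcases eq_or_eq_partner e with e' | e'
    · exact hne1 e'
    · exact hne e'
  have mH : h ∉ M' := by rw [mem_swap_iff]; simp [hne1.symm]
  have mPH : partner h ∉ M' := by
    rw [mem_swap_iff]; push_neg
    exact ⟨hne.symm, fun hc => absurd hc hph⟩
  have mH0 : h0 ∈ M' := Finset.mem_insert_self _ _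
  have mPH0 : partner h0 ∉ M' := by
    rw [mem_swap_iff]; push_neg
    exact ⟨partner_ne h0, fun hc => absurd hc hph0⟩
  have hset : Finset.univ.filter (crossP M') =
      insert h0.1 ((Finset.univ.filter (crossP M)).erase h.1) := by
    ext e
    simp only [Finset.mem_filter, Finset.mem_univ, true_and, Finset.mem_insert,
      Finset.mem_erase]
    by_cases he0 : e = h0.1
    · subst he0
      simp only [eq_self_iff_true, true_or, iff_true]
      exact crossP_of_mem mH0 mPH0
    · by_cases he : e = h.1
      · subst he
        have : ¬ crossP M' h.1 := not_crossP_of_not_mem mH mPH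
        simp [he0, this]
      · have unch : ∀ b : Bool, ((e, b) ∈ M' ↔ (e, b) ∈ M) := by
          intro b
          exact mem_swapM _ (fun hc => he (congrArg Prod.fst hc)) (fun hc => he0 (congrArg Prod.fst hc))
        simp only [he0, he, false_or, ne_eq, not_false_iff, true_and]
        unfold crossP
        rw [unch false, unch true]
  have hH : h.1 ∈ Finset.univ.filter (crossP M) := by
    simp only [Finset.mem_filter, Finset.mem_univ, true_and]
    exact crossP_of_mem hh hph
  have hH0 : h0.1 ∉ (Finset.univ.filter (crossP M)).erase h.1 := by
    intro hc
    have := (Finset.mem_erase.1 hc).2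
    simp only [Finset.mem_filter] at this
    exact not_crossP_of_not_mem hh0 hph0 this.2
  rw [cr_eq_card_crossP, cr_eq_card_crossP, hset, Finset.card_insert_of_notMem hH0,
    Finset.card_erase_of_mem hH]
  have : 1 ≤ (Finset.univ.filter (crossP M)).card := Finset.card_pos.2 ⟨h.1, hH⟩
  omega



variable {G : Multigraph}

/-- Residual source arc: an unmarked half at `v` with unmarked partner. -/
def srcArc (M : Finset G.Half) (v : G.V) : Prop :=
  ∃ h : G.Half, G.vertexOf h = v ∧ h ∉ M ∧ partner h ∉ M

/-- Residual sink arc: a marked half at `v` with marked partner. -/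
def snkArc (M : Finset G.Half) (v : G.V) : Prop :=
  ∃ h : G.Half, G.vertexOf h = v ∧ h ∈ M ∧ partner h ∈ M

/-- Residual arc from `v` to `w`. -/
def step (M : Finset G.Half) (v w : G.V) : Prop :=
  ∃ h : G.Half, G.vertexOf h = v ∧ G.vertexOf (partner h) = w ∧ (h ∈ M ∨ partner h ∉ M)

lemma chain_transfer {α : Type*} {r r' : α → α → Prop} :
    ∀ {a : α} {l : List α}, List.Chain r a l →
      (∀ x y, x ∈ a :: l → r x y → r' x y) → List.Chain r' a l := by
  intro a l h hxy
  exact List.IsChain.imp_of_mem_imp (fun x y hx _ hr => hxy x y hx hr) h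

/-- Core lemma: a maximal marking admits no residual augmenting path. -/
lemma noAug (s : G.V → ℕ) :
    ∀ (n : ℕ) (M : Finset G.Half), G.Compatible s M →
      (∀ M', G.Compatible s M' → G.cr M' ≤ G.cr M) →
      ∀ (v : G.V) (l : List G.V), l.length ≤ n → srcArc M v →
        List.Chain (step M) v l →
        snkArc M ((v :: l).getLast (List.cons_ne_nil _ _)) → False := by
  intro n
  induction n with
  | zero =>
    intro M hc hb v l hl hsrc hch hsnk
    have hl0 : l = [] := List.length_eq_zero_iff.1 (Nat.le_zero.1 hl)
    subst hl0
    simp only [List.getLast_singleton] at hsnk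
    obtain ⟨h0, hv0, hh0, hp0⟩ := hsrc
    obtain ⟨g, hvg, hg, hpg⟩ := hsnk
    have hcomp := compat_swap hc hg hh0 (by rw [hv0, hvg])
    have := hb _ hcomp
    rw [cr_swap_add_two hg hpg hh0 hp0] at this
    omega
  | succ n IH =>
    intro M hc hb v l hl hsrc hch hsnk
    match l with
    | [] =>
      simp only [List.getLast_singleton] at hsnk
      obtain ⟨h0, hv0, hh0, hp0⟩ := hsrc
      obtain ⟨g, hvg, hg, hpg⟩ := hsnk
      have hcomp := compat_swap hc hg hh0 (by rw [hv0, hvg])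
      have := hb _ hcomp
      rw [cr_swap_add_two hg hpg hh0 hp0] at this
      omega
    | w :: l' =>
      have hlast : ((v :: w :: l').getLast (List.cons_ne_nil _ _)) =
          ((w :: l').getLast (List.cons_ne_nil _ _)) :=
        List.getLast_cons (List.cons_ne_nil _ _)
      rw [hlast] at hsnk
      by_cases hspE : ∃ u ∈ w :: l', srcArc M u
      · obtain ⟨u, hu, hsu⟩ := hspE
        obtain ⟨l1, l2, heq⟩ := List.append_of_mem hu
        rw [heq] at hch hl
        have hch2 : List.Chain (step M) u l2 := (List.isChain_cons_split.1 hch).2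
        have hlen : l2.length ≤ n := by
          simp only [List.length_append, List.length_cons] at hl
          omega
        simp only [heq, List.getLast_append_of_ne_nil _ (List.cons_ne_nil u l2)] at hsnk
        exact IH M hc hb u l2 hlen hsu hch2 hsnk
      · push_neg at hspE
        have hvnot : ∀ u ∈ w :: l', u ≠ v := fun u hu e => hspE u hu (e ▸ hsrc)
        obtain ⟨h0, hh0v, hh0, hph0⟩ := hsrc
        simp only [List.Chain, List.isChain_cons_cons] at hch
        obtain ⟨hstep, hch'⟩ := hch
        obtain ⟨h1, h1v, h1pw, h1cond⟩ := hstep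
        by_cases hmem : h1 ∈ M
        · by_cases hpmem : partner h1 ∈ M
          · have hcomp := compat_swap hc hmem hh0 (by rw [hh0v, h1v])
            have := hb _ hcomp
            rw [cr_swap_add_two hmem hpmem hh0 hph0] at this
            omega
          · have hne : h0 ≠ partner h1 := by
              intro e
              rw [e, partner_partner] at hph0
              exact hph0 hmem
            have hcomp : G.Compatible s (insert h0 (M.erase h1)) :=
              compat_swap hc hmem hh0 (by rw [hh0v, h1v])
            have hcr : G.cr (insert h0 (M.erase h1)) = G.cr M :=
              cr_swap_eq hmem hpmem hh0 hph0 hne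
            set M' := insert h0 (M.erase h1) with hM'
            have hb' : ∀ M'', G.Compatible s M'' → G.cr M'' ≤ G.cr M' :=
              fun M'' h => le_of_le_of_eq (hb M'' h) hcr.symm
            have hmm : ∀ x : G.Half, x ≠ h1 → x ≠ h0 → (x ∈ M' ↔ x ∈ M) :=
              fun x hx hx0 => mem_swapM x hx hx0
            have hph1M' : partner h1 ∉ M' := by
              rw [hmm _ (partner_ne h1) (fun e => hne e.symm)]
              exact hpmem
            have hh1M' : h1 ∉ M' := by
              rw [hM', mem_swap_iff]
              push_neg
              exact ⟨fun e => hh0 (e ▸ hmem), fun _ => rfl⟩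
            have hsrc' : srcArc M' w :=
              ⟨partner h1, h1pw, hph1M', by rw [partner_partner]; exact hh1M'⟩
            have hch'' : List.Chain (step M') w l' := by
              refine chain_transfer hch' ?_
              intro x y hx hxy
              obtain ⟨h', h'x, h'y, h'c⟩ := hxy
              have hxv : x ≠ v := hvnot x hx
              have h'ne1 : h' ≠ h1 := fun e => hxv (by rw [← h'x, e, h1v])
              have h'ne0 : h' ≠ h0 := fun e => hxv (by rw [← h'x, e, hh0v])
              refine ⟨h', h'x, h'y, ?_⟩
              by_cases hh'M : h' ∈ M
              · exact Or.inl ((hmm h' h'ne1 h'ne0).2 hh'M)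
              · have hp'M : partner h' ∉ M := by
                  rcases h'c with hin | hnot
                  · exact absurd hin hh'M
                  · exact hnot
                exact absurd ⟨h', h'x, hh'M, hp'M⟩ (hspE x hx)
            obtain ⟨g, hgz, hg, hpg⟩ := hsnk
            have hz : ((w :: l').getLast (List.cons_ne_nil _ _)) ∈ w :: l' :=
              List.getLast_mem _
            have hzv : ((w :: l').getLast (List.cons_ne_nil _ _)) ≠ v := hvnot _ hz
            have hgne1 : g ≠ h1 := fun e => hzv (by rw [← hgz, e, h1v])
            have hgne0 : g ≠ h0 := fun e => hh0 (e ▸ hg)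
            have hpgne1 : partner g ≠ h1 := by
              intro e
              have hge : g = partner h1 := by rw [← partner_partner g, e]
              rw [hge] at hg; exact hpmem hg
            have hpgne0 : partner g ≠ h0 := fun e => hh0 (e ▸ hpg)
            have hsnk' : snkArc M' ((w :: l').getLast (List.cons_ne_nil _ _)) :=
              ⟨g, hgz, (hmm g hgne1 hgne0).2 hg, (hmm _ hpgne1 hpgne0).2 hpg⟩
            have hlen : l'.length ≤ n := by
              simp only [List.length_cons] at hl; omega
            exact IH M' hcomp hb' w l' hlen hsrc' hch'' hsnk'
        · rcases h1cond with hin | hnot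
          · exact absurd hin hmem
          · exact hspE w List.mem_cons_self
              ⟨partner h1, h1pw, hnot, by rw [partner_partner]; exact hmem⟩



variable {G : Multigraph}

@[simp] lemma vertexOf_false (e : G.E) : G.vertexOf (e, false) = (G.ends e).1 := rfl

@[simp] lemma vertexOf_true (e : G.E) : G.vertexOf (e, true) = (G.ends e).2 := rfl

lemma half_eq {h : G.Half} {e : G.E} (he : h.1 = e) : h = (e, false) ∨ h = (e, true) := by
  rcases h with ⟨e', b⟩
  simp only at he
  subst he
  cases b
  · exact Or.inl rfl
  · exact Or.inr rfl

/-- The set of edges with exactly one endpoint in `A`. -/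
def cutEdges (A : Finset G.V) : Finset G.E :=
  Finset.univ.filter (fun e : G.E =>
    ((G.ends e).1 ∈ A ∧ (G.ends e).2 ∉ A) ∨ ((G.ends e).1 ∉ A ∧ (G.ends e).2 ∈ A))

/-- The capacity of the cut determined by `A` (source side `A`ᶜ ... here `A` is the
set of vertices on the source side). -/
def cutCap (G : Multigraph) (s : G.V → ℕ) (A : Finset G.V) : ℕ :=
  (∑ v ∈ A, s v) + (∑ w ∈ Aᶜ, (G.deg w - s w)) + (cutEdges A).card

lemma unmarked_card {s : G.V → ℕ} {M : Finset G.Half} (hc : G.Compatible s M) (w : G.V) :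
    (Finset.univ.filter (fun h : G.Half => h ∉ M ∧ G.vertexOf h = w)).card
      = G.deg w - s w := by
  classical
  have hsplit := Finset.card_filter_add_card_filter_not
    (s := Finset.univ.filter (fun h : G.Half => G.vertexOf h = w))
    (p := fun h : G.Half => h ∈ M)
  have h1 : ((Finset.univ.filter (fun h : G.Half => G.vertexOf h = w)).filter
      (fun h : G.Half => h ∈ M)) = M.filter (fun h : G.Half => G.vertexOf h = w) := by
    ext h; simp [and_comm]
  have h2 : ((Finset.univ.filter (fun h : G.Half => G.vertexOf h = w)).filter
      (fun h : G.Half => ¬ h ∈ M)) =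
      Finset.univ.filter (fun h : G.Half => h ∉ M ∧ G.vertexOf h = w) := by
    ext h; simp [and_comm]
  rw [h1, h2, hc w] at hsplit
  have : (Finset.univ.filter (fun h : G.Half => G.vertexOf h = w)).card = G.deg w := rfl
  omega

lemma marked_in_card {s : G.V → ℕ} {M : Finset G.Half} (hc : G.Compatible s M)
    (A : Finset G.V) :
    (M.filter (fun h : G.Half => G.vertexOf h ∈ A)).card = ∑ v ∈ A, s v := by
  classical
  rw [Finset.card_eq_sum_card_fiberwise
    (s := M.filter (fun h : G.Half => G.vertexOf h ∈ A))
    (f := fun h : G.Half => G.vertexOf h) (t := A)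
    (fun h hh => Finset.mem_coe.2 (Finset.mem_filter.1 (Finset.mem_coe.1 hh)).2)]
  refine Finset.sum_congr rfl (fun v hv => ?_)
  rw [← hc v]
  congr 1
  ext h
  simp only [Finset.filter_filter, Finset.mem_filter]
  constructor
  · rintro ⟨h1, _, h3⟩; exact ⟨h1, h3⟩
  · rintro ⟨h1, h3⟩; exact ⟨h1, h3 ▸ hv, h3⟩

lemma unmarked_out_card {s : G.V → ℕ} {M : Finset G.Half} (hc : G.Compatible s M)
    (A : Finset G.V) :
    ((Finset.univ.filter (fun h : G.Half => h ∉ M ∧ G.vertexOf h ∉ A))).card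
      = ∑ w ∈ Aᶜ, (G.deg w - s w) := by
  classical
  rw [Finset.card_eq_sum_card_fiberwise
    (s := Finset.univ.filter (fun h : G.Half => h ∉ M ∧ G.vertexOf h ∉ A))
    (f := fun h : G.Half => G.vertexOf h) (t := Aᶜ)
    (fun h hh => by
      simp only [Finset.mem_coe, Finset.mem_filter] at hh
      simpa using hh.2.2)]
  refine Finset.sum_congr rfl (fun w hw => ?_)
  rw [← unmarked_card hc w]
  congr 1
  ext h
  simp only [Finset.filter_filter, Finset.mem_filter, Finset.mem_univ, true_and]
  constructor
  · rintro ⟨⟨h1, _⟩, h3⟩; exact ⟨h1, h3⟩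
  · rintro ⟨h1, h3⟩
    refine ⟨⟨h1, ?_⟩, h3⟩
    rw [h3]
    simpa using hw

/-- The main counting lemma: if the marking has no residual arc leaving
`A ∪ {source}`, then the cut capacity of `A` is at most `cr M`. -/
lemma cutCap_le_cr {s : G.V → ℕ} {M : Finset G.Half} (hc : G.Compatible s M)
    (A : Finset G.V)
    (hF1 : ∀ h : G.Half, G.vertexOf h ∈ A → h ∈ M → partner h ∉ M)
    (hF2 : ∀ h : G.Half, G.vertexOf h ∉ A → h ∉ M → partner h ∈ M)
    (hF3 : ∀ h : G.Half, G.vertexOf h ∈ A → G.vertexOf (partner h) ∉ A →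
      (h ∉ M ∧ partner h ∈ M)) :
    G.cutCap s A ≤ G.cr M := by
  classical
  set T1 : Finset G.Half := M.filter (fun h : G.Half => G.vertexOf h ∈ A) with hT1
  set T2 : Finset G.Half :=
    Finset.univ.filter (fun h : G.Half => h ∉ M ∧ G.vertexOf h ∉ A) with hT2
  set E1 : Finset G.E := T1.image Prod.fst with hE1
  set E2 : Finset G.E := T2.image Prod.fst with hE2
  set E3 : Finset G.E := cutEdges A with hE3
  have memT1 : ∀ h : G.Half, h ∈ T1 ↔ (h ∈ M ∧ G.vertexOf h ∈ A) := by
    intro h; simp [hT1]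
  have memT2 : ∀ h : G.Half, h ∈ T2 ↔ (h ∉ M ∧ G.vertexOf h ∉ A) := by
    intro h; simp [hT2]
  -- injectivity on T1
  have hcard1 : E1.card = T1.card := by
    apply Finset.card_image_of_injOn
    intro h hh h' hh' hfst
    rw [Finset.mem_coe, memT1] at hh hh'
    rcases eq_or_eq_partner hfst with e | e
    · exact e
    · exfalso; exact (hF1 h' hh'.2 hh'.1) (e ▸ hh.1)
  have hcard2 : E2.card = T2.card := by
    apply Finset.card_image_of_injOn
    intro h hh h' hh' hfst
    rw [Finset.mem_coe, memT2] at hh hh'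
    rcases eq_or_eq_partner hfst with e | e
    · exact e
    · exfalso; exact (e ▸ hh.1) (hF2 h' hh'.2 hh'.1)
  -- all are crossings
  have hsub1 : E1 ⊆ Finset.univ.filter (crossP M) := by
    intro e he
    obtain ⟨h, hh, rfl⟩ := Finset.mem_image.1 he
    rw [memT1] at hh
    simp only [Finset.mem_filter, Finset.mem_univ, true_and]
    exact crossP_of_mem hh.1 (hF1 h hh.2 hh.1)
  have hsub2 : E2 ⊆ Finset.univ.filter (crossP M) := by
    intro e he
    obtain ⟨h, hh, rfl⟩ := Finset.mem_image.1 he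
    rw [memT2] at hh
    simp only [Finset.mem_filter, Finset.mem_univ, true_and]
    exact crossP_of_not_mem hh.1 (hF2 h hh.2 hh.1)
  have hsub3 : E3 ⊆ Finset.univ.filter (crossP M) := by
    intro e he
    simp only [hE3, cutEdges, Finset.mem_filter, Finset.mem_univ, true_and] at he
    simp only [Finset.mem_filter, Finset.mem_univ, true_and]
    rcases he with ⟨h1, h2⟩ | ⟨h1, h2⟩
    · have := hF3 (e, false) (by simpa using h1) (by simpa [partner] using h2)
      exact crossP_of_not_mem this.1 this.2
    · have := hF3 (e, true) (by simpa using h2) (by simpa [partner] using h1)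
      exact crossP_of_not_mem this.1 this.2
  -- cut edges have their `A`-side half unmarked and other half marked
  have cutfact : ∀ e ∈ E3,
      (((G.ends e).1 ∈ A ∧ (G.ends e).2 ∉ A ∧ (e, false) ∉ M ∧ (e, true) ∈ M) ∨
       ((G.ends e).1 ∉ A ∧ (G.ends e).2 ∈ A ∧ (e, true) ∉ M ∧ (e, false) ∈ M)) := by
    intro e he
    simp only [hE3, cutEdges, Finset.mem_filter, Finset.mem_univ, true_and] at he
    rcases he with ⟨h1, h2⟩ | ⟨h1, h2⟩
    · have := hF3 (e, false) (by simpa using h1) (by simpa [partner] using h2)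
      exact Or.inl ⟨h1, h2, this.1, by simpa [partner] using this.2⟩
    · have := hF3 (e, true) (by simpa using h2) (by simpa [partner] using h1)
      exact Or.inr ⟨h1, h2, this.1, by simpa [partner] using this.2⟩
  -- disjointness
  have hd12 : Disjoint E1 E2 := by
    rw [Finset.disjoint_left]
    intro e he1 he2
    obtain ⟨h, hh, he⟩ := Finset.mem_image.1 he1
    obtain ⟨k, hk, hke⟩ := Finset.mem_image.1 he2
    rw [memT1] at hh; rw [memT2] at hk
    rcases eq_or_eq_partner (show k.1 = h.1 by rw [hke, he]) with e' | e'
    · rw [e'] at hk; exact hk.1 hh.1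
    · rw [e'] at hk
      have := hF3 h hh.2 hk.2
      exact this.1 hh.1
  have hd13 : Disjoint E1 E3 := by
    rw [Finset.disjoint_left]
    intro e he1 he3
    obtain ⟨h, hh, he⟩ := Finset.mem_image.1 he1
    rw [memT1] at hh
    rcases cutfact e he3 with ⟨_, h2, h3, _⟩ | ⟨h1, _, h3, _⟩
    · rcases half_eq he with e' | e'
      · rw [e'] at hh; exact h3 hh.1
      · rw [e'] at hh; exact h2 (by simpa using hh.2)
    · rcases half_eq he with e' | e'
      · rw [e'] at hh; exact h1 (by simpa using hh.2)
      · rw [e'] at hh; exact h3 hh.1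
  have hd23 : Disjoint E2 E3 := by
    rw [Finset.disjoint_left]
    intro e he2 he3
    obtain ⟨k, hk, hke⟩ := Finset.mem_image.1 he2
    rw [memT2] at hk
    rcases cutfact e he3 with ⟨h1, _, _, h4⟩ | ⟨_, h2, _, h4⟩
    · rcases half_eq hke with e' | e'
      · rw [e'] at hk; exact hk.2 (by simpa using h1)
      · rw [e'] at hk; exact hk.1 h4
    · rcases half_eq hke with e' | e'
      · rw [e'] at hk; exact hk.1 h4
      · rw [e'] at hk; exact hk.2 (by simpa using h2)
  have hdU : Disjoint (E1 ∪ E2) E3 := by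
    rw [Finset.disjoint_union_left]
    exact ⟨hd13, hd23⟩
  have hsubU : (E1 ∪ E2) ∪ E3 ⊆ Finset.univ.filter (crossP M) := by
    intro e he
    rcases Finset.mem_union.1 he with he | he
    · rcases Finset.mem_union.1 he with he | he
      · exact hsub1 he
      · exact hsub2 he
    · exact hsub3 he
  have hcardU : ((E1 ∪ E2) ∪ E3).card = E1.card + E2.card + E3.card := by
    rw [Finset.card_union_of_disjoint hdU, Finset.card_union_of_disjoint hd12]
  have hle : ((E1 ∪ E2) ∪ E3).card ≤ G.cr M := by
    rw [cr_eq_card_crossP]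
    exact Finset.card_le_card hsubU
  rw [hcardU] at hle
  rw [cutCap]
  rw [hcard1, hT1] at hle
  rw [hcard2, hT2] at hle
  rw [marked_in_card hc A] at hle
  rw [unmarked_out_card hc A] at hle
  exact hle



variable {G : Multigraph}

lemma cap_into_source (s : G.V → ℕ) (x : G.Node) : G.cap s x G.source = 0 := by
  rcases x with v | b
  · rfl
  · cases b <;> rfl

lemma cap_from_sink (s : G.V → ℕ) (y : G.Node) : G.cap s G.sink y = 0 := by
  rcases y with v | b
  · rfl
  · cases b <;> rfl

lemma cap_source_inr (s : G.V → ℕ) (b : Bool) : G.cap s G.source (Sum.inr b) = 0 := by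
  cases b <;> rfl

lemma value_eq {f : G.Node → G.Node → ℕ} (hf : G.IsFlow s f) :
    G.flowValue f = ∑ v : G.V, f G.source (Sum.inl v) := by
  have h0 : ∀ b : Bool, f G.source (Sum.inr b) = 0 := fun b =>
    Nat.le_zero.1 (le_trans (hf.1 _ _) (le_of_eq (cap_source_inr s b)))
  rw [flowValue, Fintype.sum_sum_type]
  simp [h0]

lemma sum_edgesBetween_eq_cutCard (A : Finset G.V) :
    ∑ v ∈ A, ∑ w ∈ Aᶜ, G.edgesBetween v w = (cutEdges A).card := by
  classical
  have hmap : ∀ e ∈ cutEdges (G := G) A,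
      (if (G.ends e).1 ∈ A then G.ends e else (G.ends e).swap) ∈ A ×ˢ Aᶜ := by
    intro e he
    simp only [cutEdges, Finset.mem_filter, Finset.mem_univ, true_and] at he
    rcases he with ⟨h1, h2⟩ | ⟨h1, h2⟩
    · rw [if_pos h1]
      simp only [Finset.mem_product, Finset.mem_compl]
      exact ⟨h1, h2⟩
    · rw [if_neg h1]
      simp only [Finset.mem_product, Finset.mem_compl, Prod.fst_swap, Prod.snd_swap]
      exact ⟨h2, h1⟩
  rw [Finset.card_eq_sum_card_fiberwise hmap, ← Finset.sum_product']
  refine Finset.sum_congr rfl (fun p hp => ?_)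
  obtain ⟨v, w⟩ := p
  simp only [Finset.mem_product, Finset.mem_compl] at hp
  obtain ⟨hv, hw⟩ := hp
  rw [edgesBetween]
  congr 1
  ext e
  simp only [Finset.mem_filter, Finset.mem_univ, true_and, cutEdges]
  constructor
  · rintro (hends | hends)
    · have h1 : (G.ends e).1 ∈ A := by rw [hends]; exact hv
      have h2 : (G.ends e).2 ∉ A := by rw [hends]; exact hw
      exact ⟨Or.inl ⟨h1, h2⟩, by rw [if_pos h1]; exact hends⟩
    · have h1 : (G.ends e).1 ∉ A := by rw [hends]; exact hw
      have h2 : (G.ends e).2 ∈ A := by rw [hends]; exact hv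
      refine ⟨Or.inr ⟨h1, h2⟩, ?_⟩
      rw [if_neg h1, hends]
      rfl
  · rintro ⟨hcut, hFe⟩
    rcases hcut with ⟨h1, h2⟩ | ⟨h1, h2⟩
    · rw [if_pos h1] at hFe
      exact Or.inl hFe
    · rw [if_neg h1] at hFe
      right
      have := congrArg Prod.swap hFe
      simpa using this

/-- Weak duality: any flow value is at most any cut capacity. -/
lemma flow_le_cutCap {s : G.V → ℕ} {f : G.Node → G.Node → ℕ} (hf : G.IsFlow s f)
    (A : Finset G.V) : G.flowValue f ≤ G.cutCap s A := by
  classical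
  have hcap := hf.1
  have hzsnk : ∀ y, f G.sink y = 0 := fun y =>
    Nat.le_zero.1 (le_trans (hcap _ _) (le_of_eq (cap_from_sink s y)))
  have hcons : ∀ v : G.V,
      f G.source (Sum.inl v) + ∑ w : G.V, f (Sum.inl w) (Sum.inl v)
        = f (Sum.inl v) G.sink + ∑ w : G.V, f (Sum.inl v) (Sum.inl w) := by
    intro v
    have h := hf.2 v
    rw [Fintype.sum_sum_type, Fintype.sum_sum_type] at h
    have hbs : ∑ b : Bool, f (Sum.inr b) (Sum.inl v)
        = f G.source (Sum.inl v) := by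
      rw [Fintype.sum_bool]
      have : f (Sum.inr false) (Sum.inl v) = 0 := hzsnk _
      rw [this, source]
      omega
    have hbt : ∑ b : Bool, f (Sum.inl v) (Sum.inr b) = f (Sum.inl v) G.sink := by
      rw [Fintype.sum_bool]
      have : f (Sum.inl v) (Sum.inr true) = 0 :=
        Nat.le_zero.1 (le_trans (hcap _ _) (le_of_eq (cap_into_source s _)))
      rw [this, sink]
      omega
    rw [hbs, hbt] at h
    omega
  have hsumA : (∑ v ∈ A, f G.source (Sum.inl v))
      + (∑ v ∈ A, ∑ w : G.V, f (Sum.inl w) (Sum.inl v))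
      = (∑ v ∈ A, f (Sum.inl v) G.sink)
      + (∑ v ∈ A, ∑ w : G.V, f (Sum.inl v) (Sum.inl w)) := by
    rw [← Finset.sum_add_distrib, ← Finset.sum_add_distrib]
    exact Finset.sum_congr rfl (fun v _ => hcons v)
  have hsplit1 : ∑ v ∈ A, ∑ w : G.V, f (Sum.inl w) (Sum.inl v)
      = (∑ v ∈ A, ∑ w ∈ A, f (Sum.inl w) (Sum.inl v))
        + (∑ v ∈ A, ∑ w ∈ Aᶜ, f (Sum.inl w) (Sum.inl v)) := by
    rw [← Finset.sum_add_distrib]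
    exact Finset.sum_congr rfl (fun v _ => (Finset.sum_add_sum_compl A _).symm)
  have hsplit2 : ∑ v ∈ A, ∑ w : G.V, f (Sum.inl v) (Sum.inl w)
      = (∑ v ∈ A, ∑ w ∈ A, f (Sum.inl v) (Sum.inl w))
        + (∑ v ∈ A, ∑ w ∈ Aᶜ, f (Sum.inl v) (Sum.inl w)) := by
    rw [← Finset.sum_add_distrib]
    exact Finset.sum_congr rfl (fun v _ => (Finset.sum_add_sum_compl A _).symm)
  have hswap : ∑ v ∈ A, ∑ w ∈ A, f (Sum.inl w) (Sum.inl v)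
      = ∑ v ∈ A, ∑ w ∈ A, f (Sum.inl v) (Sum.inl w) := Finset.sum_comm
  rw [hsplit1, hsplit2, hswap] at hsumA
  have hkey : (∑ v ∈ A, f G.source (Sum.inl v))
      ≤ (∑ v ∈ A, f (Sum.inl v) G.sink)
        + (∑ v ∈ A, ∑ w ∈ Aᶜ, f (Sum.inl v) (Sum.inl w)) := by omega
  have hvalue : G.flowValue f = (∑ v ∈ A, f G.source (Sum.inl v))
      + (∑ v ∈ Aᶜ, f G.source (Sum.inl v)) := by
    rw [value_eq hf, ← Finset.sum_add_sum_compl A]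
  have hbA : (∑ v ∈ A, f (Sum.inl v) G.sink) ≤ ∑ v ∈ A, s v :=
    Finset.sum_le_sum (fun v _ => hcap (Sum.inl v) G.sink)
  have haC : (∑ v ∈ Aᶜ, f G.source (Sum.inl v)) ≤ ∑ w ∈ Aᶜ, (G.deg w - s w) :=
    Finset.sum_le_sum (fun w _ => hcap G.source (Sum.inl w))
  have hY : (∑ v ∈ A, ∑ w ∈ Aᶜ, f (Sum.inl v) (Sum.inl w))
      ≤ ∑ v ∈ A, ∑ w ∈ Aᶜ, G.edgesBetween v w := by
    refine Finset.sum_le_sum (fun v _ => Finset.sum_le_sum (fun w _ => ?_))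
    refine le_trans (hcap (Sum.inl v) (Sum.inl w)) ?_
    show (if v = w then 0 else G.edgesBetween v w) ≤ G.edgesBetween v w
    split <;> omega
  rw [sum_edgesBetween_eq_cutCard A] at hY
  rw [cutCap]
  omega



variable {G : Multigraph}

/-- The flow associated to a marking: one unit along each crossing edge, from its
unmarked half to its marked half. -/
def markFlow (G : Multigraph) (M : Finset G.Half) : G.Node → G.Node → ℕ
  | Sum.inr true, Sum.inl v =>
      (Finset.univ.filter (fun h : G.Half =>
        h ∉ M ∧ partner h ∈ M ∧ G.vertexOf h = v)).card
  | Sum.inl v, Sum.inr false =>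
      (Finset.univ.filter (fun h : G.Half =>
        h ∈ M ∧ partner h ∉ M ∧ G.vertexOf h = v)).card
  | Sum.inl v, Sum.inl w => if v = w then 0 else
      (Finset.univ.filter (fun h : G.Half =>
        h ∉ M ∧ partner h ∈ M ∧ G.vertexOf h = v ∧ G.vertexOf (partner h) = w)).card
  | _, _ => 0

lemma card_partner_flip (P : G.Half → Prop) [DecidablePred P] :
    (Finset.univ.filter P).card
      = (Finset.univ.filter (fun h : G.Half => P (partner h))).card := by
  classical
  refine Finset.card_bij' (fun h _ => partner h) (fun h _ => partner h) ?_ ?_ ?_ ?_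
  · intro a ha
    simp only [Finset.mem_filter, Finset.mem_univ, true_and] at ha ⊢
    rw [partner_partner]
    exact ha
  · intro a ha
    simp only [Finset.mem_filter, Finset.mem_univ, true_and] at ha ⊢
    exact ha
  · intro a _; exact partner_partner a
  · intro a _; exact partner_partner a

lemma marked_card {s : G.V → ℕ} {M : Finset G.Half} (hc : G.Compatible s M) (v : G.V) :
    (Finset.univ.filter (fun h : G.Half => h ∈ M ∧ G.vertexOf h = v)).card = s v := by
  rw [← hc v]
  congr 1
  ext h
  simp [and_comm]

lemma markFlow_isFlow {s : G.V → ℕ} {M : Finset G.Half} (hc : G.Compatible s M) :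
    G.IsFlow s (G.markFlow M) := by
  classical
  constructor
  · -- capacities
    intro x y
    rcases x with v | bx
    · rcases y with w | by'
      · -- v → w
        show (if v = w then 0 else _) ≤ G.cap s (Sum.inl v) (Sum.inl w)
        show _ ≤ (if v = w then 0 else G.edgesBetween v w)
        by_cases hvw : v = w
        · simp [markFlow, hvw]
        · rw [if_neg hvw, if_neg hvw]
          rw [edgesBetween]
          apply Finset.card_le_card_of_injOn Prod.fst
          · intro h hh
            simp only [Finset.mem_coe, Finset.mem_filter, Finset.mem_univ, true_and] at hh ⊢
            obtain ⟨_, _, hv, hw⟩ := hh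
            rcases h with ⟨e, b⟩
            cases b
            · left
              have h1 : (G.ends e).1 = v := hv
              have h2 : (G.ends e).2 = w := hw
              rw [← h1, ← h2]
            · right
              have h1 : (G.ends e).2 = v := hv
              have h2 : (G.ends e).1 = w := hw
              rw [← h1, ← h2]
          · intro h hh h' hh' hfst
            simp only [Finset.mem_coe, Finset.mem_filter, Finset.mem_univ, true_and] at hh hh'
            rcases eq_or_eq_partner (show h.1 = h'.1 from hfst) with e' | e'
            · exact e'
            · exfalso
              rw [e'] at hh
              exact hh.1 hh'.2.1
      · -- v → inr
        cases by'
        · show _ ≤ s v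
          rw [show G.markFlow M (Sum.inl v) (Sum.inr false)
            = (Finset.univ.filter (fun h : G.Half =>
                h ∈ M ∧ partner h ∉ M ∧ G.vertexOf h = v)).card from rfl]
          rw [← marked_card hc v]
          apply Finset.card_le_card
          intro h hh
          simp only [Finset.mem_filter, Finset.mem_univ, true_and] at hh ⊢
          exact ⟨hh.1, hh.2.2⟩
        · show (0 : ℕ) ≤ _
          exact Nat.zero_le _
    · rcases y with w | by'
      · cases bx
        · show (0 : ℕ) ≤ _
          exact Nat.zero_le _
        · show _ ≤ G.deg w - s w
          rw [show G.markFlow M (Sum.inr true) (Sum.inl w)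
            = (Finset.univ.filter (fun h : G.Half =>
                h ∉ M ∧ partner h ∈ M ∧ G.vertexOf h = w)).card from rfl]
          rw [← unmarked_card hc w]
          apply Finset.card_le_card
          intro h hh
          simp only [Finset.mem_filter, Finset.mem_univ, true_and] at hh ⊢
          exact ⟨hh.1, hh.2.2⟩
      · cases bx <;> cases by' <;> exact Nat.zero_le _
  · -- conservation
    intro v
    rw [Fintype.sum_sum_type, Fintype.sum_sum_type, Fintype.sum_bool, Fintype.sum_bool]
    have z1 : G.markFlow M (Sum.inr false) (Sum.inl v) = 0 := rfl
    have z2 : G.markFlow M (Sum.inl v) (Sum.inr true) = 0 := rfl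
    rw [z1, z2]
    -- name the pieces
    set a := G.markFlow M (Sum.inr true) (Sum.inl v) with ha
    set b := G.markFlow M (Sum.inl v) (Sum.inr false) with hb
    -- incoming from vertices
    have hIn : (∑ w : G.V, G.markFlow M (Sum.inl w) (Sum.inl v))
        = (Finset.univ.filter (fun h : G.Half =>
            h ∉ M ∧ partner h ∈ M ∧ G.vertexOf (partner h) = v ∧ G.vertexOf h ≠ v)).card := by
      rw [Finset.card_eq_sum_card_fiberwise
        (f := fun h : G.Half => G.vertexOf h) (t := Finset.univ)
        (fun h _ => Finset.mem_univ _)]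
      refine Finset.sum_congr rfl (fun w _ => ?_)
      by_cases hwv : w = v
      · subst hwv
        rw [show G.markFlow M (Sum.inl w) (Sum.inl w) = 0 from by simp [markFlow]]
        symm
        rw [Finset.card_eq_zero]
        ext h
        simp only [Finset.filter_filter, Finset.mem_filter, Finset.mem_univ, true_and,
          Finset.notMem_empty, iff_false, not_and]
        tauto
      · rw [show G.markFlow M (Sum.inl w) (Sum.inl v)
            = (Finset.univ.filter (fun h : G.Half =>
                h ∉ M ∧ partner h ∈ M ∧ G.vertexOf h = w ∧ G.vertexOf (partner h) = v)).card
          from by simp [markFlow, hwv]]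
        congr 1
        ext h
        simp only [Finset.filter_filter, Finset.mem_filter, Finset.mem_univ, true_and]
        constructor
        · rintro ⟨h1, h2, h3, h4⟩
          exact ⟨⟨h1, h2, h4, fun hc' => hwv (h3.symm.trans hc')⟩, h3⟩
        · rintro ⟨⟨h1, h2, h3, h4⟩, h5⟩
          exact ⟨h1, h2, h5, h3⟩

    have hOut : (∑ w : G.V, G.markFlow M (Sum.inl v) (Sum.inl w))
        = (Finset.univ.filter (fun h : G.Half =>
            h ∉ M ∧ partner h ∈ M ∧ G.vertexOf h = v ∧ G.vertexOf (partner h) ≠ v)).card := by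
      rw [Finset.card_eq_sum_card_fiberwise
        (f := fun h : G.Half => G.vertexOf (partner h)) (t := Finset.univ)
        (fun h _ => Finset.mem_univ _)]
      refine Finset.sum_congr rfl (fun w _ => ?_)
      by_cases hwv : v = w
      · subst hwv
        rw [show G.markFlow M (Sum.inl v) (Sum.inl v) = 0 from by simp [markFlow]]
        symm
        rw [Finset.card_eq_zero]
        ext h
        simp only [Finset.filter_filter, Finset.mem_filter, Finset.mem_univ, true_and,
          Finset.notMem_empty, iff_false, not_and]
        tauto
      · rw [show G.markFlow M (Sum.inl v) (Sum.inl w)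
            = (Finset.univ.filter (fun h : G.Half =>
                h ∉ M ∧ partner h ∈ M ∧ G.vertexOf h = v ∧ G.vertexOf (partner h) = w)).card
          from by simp [markFlow, hwv]]
        congr 1
        ext h
        simp only [Finset.filter_filter, Finset.mem_filter, Finset.mem_univ, true_and]
        constructor
        · rintro ⟨h1, h2, h3, h4⟩
          exact ⟨⟨h1, h2, h3, fun hc' => hwv (hc'.symm.trans h4)⟩, h4⟩
        · rintro ⟨⟨h1, h2, h3, h4⟩, h5⟩
          exact ⟨h1, h2, h3, h5⟩
    set L1 : Finset G.Half := Finset.univ.filter (fun h : G.Half =>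
      h ∉ M ∧ partner h ∈ M ∧ G.vertexOf h = v ∧ G.vertexOf (partner h) = v) with hL1
    set L2 : Finset G.Half := Finset.univ.filter (fun h : G.Half =>
      h ∉ M ∧ partner h ∈ M ∧ G.vertexOf h = v ∧ G.vertexOf (partner h) ≠ v) with hL2
    set K1 : Finset G.Half := Finset.univ.filter (fun h : G.Half =>
      h ∈ M ∧ partner h ∉ M ∧ G.vertexOf h = v ∧ G.vertexOf (partner h) = v) with hK1
    set K2 : Finset G.Half := Finset.univ.filter (fun h : G.Half =>
      h ∈ M ∧ partner h ∉ M ∧ G.vertexOf h = v ∧ G.vertexOf (partner h) ≠ v) with hK2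
    have hflip1 : (Finset.univ.filter (fun h : G.Half =>
        h ∉ M ∧ partner h ∈ M ∧ G.vertexOf (partner h) = v ∧ G.vertexOf h ≠ v)).card
          = K2.card := by
      rw [card_partner_flip]
      congr 1
      ext h
      simp only [Finset.mem_filter, Finset.mem_univ, true_and, partner_partner, hK2]
      tauto
    have hflip2 : L1.card = K1.card := by
      rw [hL1, hK1, card_partner_flip]
      congr 1
      ext h
      simp only [Finset.mem_filter, Finset.mem_univ, true_and, partner_partner]
      tauto
    have hdeca : a = L1.card + L2.card := by
      have hsplit := Finset.card_filter_add_card_filter_not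
        (s := Finset.univ.filter (fun h : G.Half =>
          h ∉ M ∧ partner h ∈ M ∧ G.vertexOf h = v))
        (p := fun h : G.Half => G.vertexOf (partner h) = v)
      have e1 : (Finset.univ.filter (fun h : G.Half =>
          h ∉ M ∧ partner h ∈ M ∧ G.vertexOf h = v)).filter
            (fun h : G.Half => G.vertexOf (partner h) = v) = L1 := by
        rw [hL1]
        ext h
        simp only [Finset.filter_filter, Finset.mem_filter, Finset.mem_univ, true_and]
        tauto
      have e2 : (Finset.univ.filter (fun h : G.Half =>
          h ∉ M ∧ partner h ∈ M ∧ G.vertexOf h = v)).filter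
            (fun h : G.Half => ¬ G.vertexOf (partner h) = v) = L2 := by
        rw [hL2]
        ext h
        simp only [Finset.filter_filter, Finset.mem_filter, Finset.mem_univ, true_and]
        tauto
      rw [e1, e2] at hsplit
      rw [ha]
      show (Finset.univ.filter (fun h : G.Half =>
        h ∉ M ∧ partner h ∈ M ∧ G.vertexOf h = v)).card = L1.card + L2.card
      omega
    have hdecb : b = K1.card + K2.card := by
      have hsplit := Finset.card_filter_add_card_filter_not
        (s := Finset.univ.filter (fun h : G.Half =>
          h ∈ M ∧ partner h ∉ M ∧ G.vertexOf h = v))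
        (p := fun h : G.Half => G.vertexOf (partner h) = v)
      have e1 : (Finset.univ.filter (fun h : G.Half =>
          h ∈ M ∧ partner h ∉ M ∧ G.vertexOf h = v)).filter
            (fun h : G.Half => G.vertexOf (partner h) = v) = K1 := by
        rw [hK1]
        ext h
        simp only [Finset.filter_filter, Finset.mem_filter, Finset.mem_univ, true_and]
        tauto
      have e2 : (Finset.univ.filter (fun h : G.Half =>
          h ∈ M ∧ partner h ∉ M ∧ G.vertexOf h = v)).filter
            (fun h : G.Half => ¬ G.vertexOf (partner h) = v) = K2 := by
        rw [hK2]
        ext h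
        simp only [Finset.filter_filter, Finset.mem_filter, Finset.mem_univ, true_and]
        tauto
      rw [e1, e2] at hsplit
      rw [hb]
      show (Finset.univ.filter (fun h : G.Half =>
        h ∈ M ∧ partner h ∉ M ∧ G.vertexOf h = v)).card = K1.card + K2.card
      omega
    rw [hIn, hOut, hflip1]
    omega

/-- The value of the flow of a marking is the number of crossings. -/
lemma markFlow_value {M : Finset G.Half} : G.flowValue (G.markFlow M) = G.cr M := by
  classical
  have hval : G.flowValue (G.markFlow M)
      = ∑ v : G.V, G.markFlow M G.source (Sum.inl v) := by
    rw [flowValue, Fintype.sum_sum_type, Fintype.sum_bool]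
    have z1 : G.markFlow M G.source (Sum.inr true) = 0 := rfl
    have z2 : G.markFlow M G.source (Sum.inr false) = 0 := rfl
    rw [show (Sum.inr true : G.Node) = G.source from rfl] at *
    rw [z1, z2]
    omega
  rw [hval]
  have hfib : ∑ v : G.V, G.markFlow M G.source (Sum.inl v)
      = (Finset.univ.filter (fun h : G.Half => h ∉ M ∧ partner h ∈ M)).card := by
    rw [Finset.card_eq_sum_card_fiberwise
      (f := fun h : G.Half => G.vertexOf h) (t := Finset.univ)
      (fun h _ => Finset.mem_univ _)]
    refine Finset.sum_congr rfl (fun v _ => ?_)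
    rw [show G.markFlow M G.source (Sum.inl v)
        = (Finset.univ.filter (fun h : G.Half =>
            h ∉ M ∧ partner h ∈ M ∧ G.vertexOf h = v)).card from rfl]
    congr 1
    ext h
    simp only [Finset.filter_filter, Finset.mem_filter, Finset.mem_univ, true_and]
    tauto
  rw [hfib, cr_eq_card_crossP]
  refine Finset.card_bij (fun h _ => h.1) ?_ ?_ ?_
  · intro h hh
    simp only [Finset.mem_filter, Finset.mem_univ, true_and] at hh ⊢
    exact crossP_of_not_mem hh.1 hh.2
  · intro h hh h' hh' hfst
    simp only [Finset.mem_filter, Finset.mem_univ, true_and] at hh hh'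
    rcases eq_or_eq_partner (show h.1 = h'.1 from hfst) with e' | e'
    · exact e'
    · exfalso
      rw [e'] at hh
      exact hh.1 hh'.2
  · intro e he
    simp only [Finset.mem_filter, Finset.mem_univ, true_and] at he
    rcases he with ⟨h1, h2⟩ | ⟨h1, h2⟩
    · refine ⟨(e, true), ?_, rfl⟩
      simp only [Finset.mem_filter, Finset.mem_univ, true_and]
      exact ⟨h2, show (e, false) ∈ M from h1⟩
    · refine ⟨(e, false), ?_, rfl⟩
      simp only [Finset.mem_filter, Finset.mem_univ, true_and]
      exact ⟨h1, show (e, true) ∈ M from h2⟩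



variable {G : Multigraph}

/-- Reachability from the source in the residual graph of a marking. -/
def reach (M : Finset G.Half) (v : G.V) : Prop :=
  ∃ u : G.V, srcArc M u ∧ Relation.ReflTransGen (step M) u v

lemma exists_compatible {s : G.V → ℕ} (hs : ∀ v : G.V, s v ≤ G.deg v) :
    ∃ M : Finset G.Half, G.Compatible s M := by
  classical
  have hch : ∀ v : G.V, ∃ T : Finset G.Half,
      T ⊆ Finset.univ.filter (fun h : G.Half => G.vertexOf h = v) ∧ T.card = s v := by
    intro v
    obtain ⟨T, hT, hc⟩ := Finset.exists_subset_card_eq (s := Finset.univ.filter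
      (fun h : G.Half => G.vertexOf h = v)) (hs v)
    exact ⟨T, hT, hc⟩
  choose T hTsub hTcard using hch
  refine ⟨Finset.univ.biUnion T, fun u => ?_⟩
  have : (Finset.univ.biUnion T).filter (fun h : G.Half => G.vertexOf h = u) = T u := by
    ext h
    simp only [Finset.mem_filter, Finset.mem_biUnion, Finset.mem_univ, true_and]
    constructor
    · rintro ⟨⟨w, hw⟩, hu⟩
      have : G.vertexOf h = w := (Finset.mem_filter.1 (hTsub w hw)).2
      have hw' : w = u := this.symm.trans hu
      rwa [hw'] at hw
    · intro hT
      refine ⟨⟨u, hT⟩, (Finset.mem_filter.1 (hTsub u hT)).2⟩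
  rw [this, hTcard]

theorem maxFlow_eq_area' (G : Multigraph) (s : G.V → ℕ)
    (hs : ∀ v : G.V, s v ≤ G.deg v) :
    G.maxFlow s = G.area s := by
  classical
  set crSet : Set ℕ := {k : ℕ | ∃ M : Finset G.Half, G.Compatible s M ∧ G.cr M = k}
    with hcrSet
  set flSet : Set ℕ := {k : ℕ | ∃ f : G.Node → G.Node → ℕ, G.IsFlow s f ∧ G.flowValue f = k}
    with hflSet
  have harea : G.area s = sSup crSet := rfl
  have hmaxf : G.maxFlow s = sSup flSet := rfl
  obtain ⟨M0, hM0⟩ := exists_compatible hs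
  have hcrne : crSet.Nonempty := ⟨G.cr M0, M0, hM0, rfl⟩
  have hcrbdd : BddAbove crSet := by
    refine ⟨Fintype.card G.E, ?_⟩
    rintro k ⟨M, _, rfl⟩
    calc G.cr M ≤ (Finset.univ : Finset G.E).card := Finset.card_filter_le _ _
    _ = Fintype.card G.E := rfl
  have hflbdd : BddAbove flSet := by
    refine ⟨∑ x : G.Node, G.cap s G.source x, ?_⟩
    rintro k ⟨f, hf, rfl⟩
    exact Finset.sum_le_sum (fun x _ => hf.1 _ x)
  have hflne : flSet.Nonempty := by
    refine ⟨0, fun _ _ => 0, ⟨fun x y => Nat.zero_le _, fun v => by simp⟩, by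
      simp [flowValue]⟩
  have hmem : sSup crSet ∈ crSet := Nat.sSup_mem hcrne hcrbdd
  obtain ⟨Mstar, hMc, hMcr⟩ := hmem
  have hmax : ∀ M', G.Compatible s M' → G.cr M' ≤ G.cr Mstar := by
    intro M' h'
    rw [hMcr]
    exact le_csSup hcrbdd ⟨M', h', rfl⟩
  have h1 : G.area s ≤ G.maxFlow s := by
    rw [harea, hmaxf, ← hMcr, ← markFlow_value (M := Mstar)]
    exact le_csSup hflbdd ⟨G.markFlow Mstar, markFlow_isFlow hMc, rfl⟩
  have h2 : G.maxFlow s ≤ G.area s := by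
    rw [harea, hmaxf]
    apply csSup_le hflne
    rintro k ⟨f, hf, rfl⟩
    set A : Finset G.V := Finset.univ.filter (fun v => reach Mstar v) with hA
    have hmemA : ∀ v : G.V, v ∈ A ↔ reach Mstar v := by
      intro v; simp [hA]
    have hF3 : ∀ h : G.Half, G.vertexOf h ∈ A → G.vertexOf (partner h) ∉ A →
        (h ∉ Mstar ∧ partner h ∈ Mstar) := by
      intro h hin hout
      by_contra hcon
      have hd : h ∈ Mstar ∨ partner h ∉ Mstar := by tauto
      have hstep : step Mstar (G.vertexOf h) (G.vertexOf (partner h)) := ⟨h, rfl, rfl, hd⟩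
      obtain ⟨u, hu1, hu2⟩ := (hmemA _).1 hin
      exact hout ((hmemA _).2 ⟨u, hu1, hu2.tail hstep⟩)
    have hF2 : ∀ h : G.Half, G.vertexOf h ∉ A → h ∉ Mstar → partner h ∈ Mstar := by
      intro h hout hnm
      by_contra hpm
      exact hout ((hmemA _).2 ⟨G.vertexOf h, ⟨h, rfl, hnm, hpm⟩, Relation.ReflTransGen.refl⟩)
    have hF1 : ∀ h : G.Half, G.vertexOf h ∈ A → h ∈ Mstar → partner h ∉ Mstar := by
      intro h hin hm
      by_contra hpm
      obtain ⟨u, hu1, hu2⟩ := (hmemA _).1 hin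
      obtain ⟨l, hchain, hlast⟩ := List.exists_isChain_cons_of_relationReflTransGen hu2
      refine noAug s l.length Mstar hMc hmax u l le_rfl hu1 hchain ?_
      rw [hlast]
      exact ⟨h, rfl, hm, hpm⟩
    calc G.flowValue f ≤ G.cutCap s A := flow_le_cutCap hf A
      _ ≤ G.cr Mstar := cutCap_le_cr hMc A hF1 hF2 hF3
      _ = sSup crSet := hMcr
  exact le_antisymm h2 h1

end Multigraph


/-- The maximal flow `X_{Γ,s}` in the network `N_{Γ,s}` equals the
area `|∂S|` of the pair `(Γ, s)`, i.e. the maximum of `cr M` over compatible markings. -/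
theorem maxFlow_eq_area (G : Multigraph) (s : G.V → ℕ)
    (hs : ∀ v : G.V, s v ≤ G.deg v) :
    G.maxFlow s = G.area s := Multigraph.maxFlow_eq_area' G s hs
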